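/- Let f : [0,1] → ℝ be a continuous function with f(φ) > 0 for φ > 0, f(0) = 0, and such that the limit as φ → 0⁺ of φ/f(φ) exists and is positive. Then the limit as ε → 0⁺ of ∫₀¹ (ε/f(φ)) · exp(−ε/f(φ)) dφ equals 0. -/

import Mathlib

open Real Filter MeasureTheory

/-- If `f` is continuous on `[0,1]`, positive on `(0,1]`, vanishes at `0`, and
`φ / f φ` has a positive limit as `φ → 0⁺`, then
`∫₀¹ (ε / f φ) · exp(−ε / f φ) dφ → 0` as `ε → 0⁺`. -/
theorem limit_K_eps_zero (f : ℝ → ℝ)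
    (hf_cont : ContinuousOn f (Set.Icc 0 1))
    (hf_pos : ∀ φ : ℝ, φ ∈ Set.Ioc (0:ℝ) 1 → 0 < f φ)
    (hf_zero : f 0 = 0)
    (L : ℝ) (hL : 0 < L)
    (hlim : Tendsto (fun φ => φ / f φ) (nhdsWithin 0 (Set.Ioi 0)) (nhds L)) :
    Tendsto (fun ε => ∫ φ in (0:ℝ)..1, (ε / f φ) * Real.exp (-(ε / f φ)))
      (nhdsWithin 0 (Set.Ioi 0)) (nhds 0) := by
  simp only [intervalIntegral.integral_of_le (zero_le_one : (0:ℝ) ≤ 1)]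
  have hmem : ∀ᵐ φ ∂(volume.restrict (Set.Ioc (0:ℝ) 1)), φ ∈ Set.Ioc (0:ℝ) 1 :=
    ae_restrict_mem measurableSet_Ioc
  have hfm : AEMeasurable f (volume.restrict (Set.Ioc (0:ℝ) 1)) :=
    (hf_cont.mono Set.Ioc_subset_Icc_self).aemeasurable measurableSet_Ioc
  rw [show nhds (0:ℝ) = nhds (∫ φ in Set.Ioc (0:ℝ) 1, (0:ℝ)) by simp]
  apply tendsto_integral_filter_of_dominated_convergence (fun _ => (1:ℝ))
  · filter_upwards with ε
    exact ((aemeasurable_const.div hfm).mul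
      (Real.measurable_exp.comp_aemeasurable
        (aemeasurable_const.div hfm).neg)).aestronglyMeasurable
  · filter_upwards [self_mem_nhdsWithin] with ε (hε : ε ∈ Set.Ioi (0:ℝ))
    filter_upwards [hmem] with φ hφ
    have hfφ : 0 < f φ := hf_pos φ hφ
    set x := ε / f φ with hx
    have hx0 : 0 ≤ x := div_nonneg (le_of_lt hε) hfφ.le
    have h1 : x * Real.exp (-x) ≤ 1 := by
      have hxe : x ≤ Real.exp x := le_trans (by linarith) (Real.add_one_le_exp x)
      have := mul_le_mul_of_nonneg_right hxe (Real.exp_pos (-x)).le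
      rwa [← Real.exp_add, add_neg_cancel, Real.exp_zero] at this
    rw [Real.norm_eq_abs, abs_of_nonneg (mul_nonneg hx0 (Real.exp_pos _).le)]
    exact h1
  · simp [integrable_const]
  · filter_upwards [hmem] with φ hφ
    have hfφ : 0 < f φ := hf_pos φ hφ
    have h1 : Tendsto (fun ε : ℝ => ε / f φ) (nhdsWithin 0 (Set.Ioi 0)) (nhds 0) := by
      have h : Tendsto (fun ε : ℝ => ε / f φ) (nhds 0) (nhds (0 / f φ)) :=
        tendsto_id.div_const (f φ)
      rw [zero_div] at h
      exact h.mono_left nhdsWithin_le_nhds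
    have hc : Continuous (fun x : ℝ => x * Real.exp (-x)) :=
      continuous_id.mul (Real.continuous_exp.comp continuous_neg)
    have := (hc.tendsto 0).comp h1
    simpa [Function.comp_def] using this
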